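/- (Variance of Russian Roulette under A-orthogonality) In the setting of the unbiased Russian Roulette estimator with A-orthogonal directions p_j, the expected squared energy error satisfies E[‖x̂ − x*‖_A²] = ∑_{j=0}^{N-1} ((1 − Q(j))/Q(j))·α_j²‖p_j‖_A², where Q(j) = P(T > j). -/

import Mathlib

open MeasureTheory Matrix

lemma sum_dotProduct' {n : Type*} [Fintype n] {ι : Type*} (s : Finset ι)
    (g : ι → n → ℝ) (u : n → ℝ) :
    (∑ j ∈ s, g j) ⬝ᵥ u = ∑ j ∈ s, g j ⬝ᵥ u := by
  simp only [dotProduct, Finset.sum_apply, Finset.sum_mul]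
  exact Finset.sum_comm

lemma dotProduct_sum' {n : Type*} [Fintype n] {ι : Type*} (s : Finset ι)
    (u : n → ℝ) (g : ι → n → ℝ) :
    u ⬝ᵥ (∑ j ∈ s, g j) = ∑ j ∈ s, u ⬝ᵥ g j := by
  simp only [dotProduct, Finset.sum_apply, Finset.mul_sum]
  exact Finset.sum_comm

lemma integral_ite_mem {Ω : Type*} [MeasurableSpace Ω] (μ : Measure Ω)
    [IsProbabilityMeasure μ] (c : Ω → Prop) [DecidablePred c]
    (hS : MeasurableSet {ω | c ω}) (a b : ℝ) :
    ∫ ω, (if c ω then a else b) ∂μ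
      = a * (μ {ω | c ω}).toReal + b * (1 - (μ {ω | c ω}).toReal) := by
  have h : (fun ω => if c ω then a else b)
      = fun ω => Set.indicator {ω | c ω} (fun _ => a - b) ω + b := by
    funext ω; by_cases h : c ω <;> simp [Set.indicator, h]
  rw [h, integral_add ((integrable_const (a - b)).indicator hS) (integrable_const b),
    integral_indicator_const _ hS, integral_const]
  simp [measure_univ]
  rw [measureReal_def]
  ring

lemma integrable_ite_mem {Ω : Type*} [MeasurableSpace Ω] (μ : Measure Ω)
    [IsProbabilityMeasure μ] (c : Ω → Prop) [DecidablePred c]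
    (hS : MeasurableSet {ω | c ω}) (a b : ℝ) :
    Integrable (fun ω => if c ω then a else b) μ := by
  have h : (fun ω => if c ω then a else b)
      = fun ω => Set.indicator {ω | c ω} (fun _ => a - b) ω + b := by
    funext ω; by_cases h : c ω <;> simp [Set.indicator, h]
  rw [h]
  exact ((integrable_const (a - b)).indicator hS).add (integrable_const b)

theorem russian_roulette_variance_A_orthogonal
    {Ω : Type*} [MeasurableSpace Ω] (μ : Measure Ω) [IsProbabilityMeasure μ]
    (M N : ℕ) (A : Matrix (Fin M) (Fin M) ℝ) (hA : A.PosDef)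
    (p : ℕ → (Fin M → ℝ))
    (horth : ∀ j k, j < N → k < N → j ≠ k → (A.mulVec (p j)) ⬝ᵥ p k = 0)
    (α : ℕ → ℝ) (x0 xstar : Fin M → ℝ)
    (hxstar : xstar = x0 + ∑ j ∈ Finset.range N, α j • p j)
    (T : Ω → ℕ) (hT : Measurable T)
    (Q : ℕ → ℝ) (hQ : ∀ j, Q j = (μ {ω | j < T ω}).toReal)
    (hQpos : ∀ j, j < N → 0 < Q j)
    (xhat : Ω → (Fin M → ℝ))
    (hxhat : ∀ ω, xhat ω = x0 + ∑ j ∈ Finset.range N,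
        if j < T ω then (α j / Q j) • p j else 0) :
    ∫ ω, (xhat ω - xstar) ⬝ᵥ A.mulVec (xhat ω - xstar) ∂μ
      = ∑ j ∈ Finset.range N,
          ((1 - Q j) / Q j) * (α j) ^ 2 * (p j ⬝ᵥ A.mulVec (p j)) := by
  -- the coefficient of p j in xhat ω - xstar
  set d : ℕ → Ω → ℝ := fun j ω => (if j < T ω then α j / Q j else 0) - α j with hd
  have hdiff : ∀ ω, xhat ω - xstar = ∑ j ∈ Finset.range N, d j ω • p j := by
    intro ω
    rw [hxhat ω, hxstar]
    have : ∀ j, (if j < T ω then (α j / Q j) • p j else 0)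
        = (if j < T ω then α j / Q j else 0) • p j := by
      intro j; by_cases h : j < T ω <;> simp [h]
    simp only [this]
    rw [add_sub_add_left_eq_sub, ← Finset.sum_sub_distrib]
    refine Finset.sum_congr rfl fun j _ => ?_
    rw [hd, sub_smul]
  -- quadratic form expansion using A-orthogonality
  have expand : ∀ (f : ℕ → ℝ),
      (∑ j ∈ Finset.range N, f j • p j) ⬝ᵥ A.mulVec (∑ j ∈ Finset.range N, f j • p j)
      = ∑ j ∈ Finset.range N, (f j)^2 * (p j ⬝ᵥ A.mulVec (p j)) := by
    intro f
    have hmv : A.mulVec (∑ j ∈ Finset.range N, f j • p j)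
        = ∑ j ∈ Finset.range N, f j • A.mulVec (p j) := by
      rw [← A.mulVecLin_apply, map_sum]
      simp [Matrix.mulVecLin_apply]
    rw [hmv, sum_dotProduct']
    refine Finset.sum_congr rfl fun j hj => ?_
    rw [dotProduct_sum', Finset.sum_eq_single j]
    · rw [smul_dotProduct, dotProduct_smul]; ring_nf
    · intro k hk hkj
      rw [smul_dotProduct, dotProduct_smul]
      have : p j ⬝ᵥ A.mulVec (p k) = 0 := by
        rw [dotProduct_comm]
        exact horth k j (Finset.mem_range.mp hk) (Finset.mem_range.mp hj) hkj
      simp [this]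
    · intro h; exact absurd hj h
  -- pointwise form of the integrand
  have hpt : ∀ ω, (xhat ω - xstar) ⬝ᵥ A.mulVec (xhat ω - xstar)
      = ∑ j ∈ Finset.range N,
          (if j < T ω then ((α j / Q j - α j)^2) * (p j ⬝ᵥ A.mulVec (p j))
            else (α j)^2 * (p j ⬝ᵥ A.mulVec (p j))) := by
    intro ω
    rw [hdiff ω, expand (fun j => d j ω)]
    refine Finset.sum_congr rfl fun j _ => ?_
    by_cases h : j < T ω <;> simp only [hd, h, if_true, if_false] <;> ring
  have hSmeas : ∀ j, MeasurableSet {ω | j < T ω} := fun j =>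
    hT (measurableSet_lt measurable_const measurable_id)
  calc ∫ ω, (xhat ω - xstar) ⬝ᵥ A.mulVec (xhat ω - xstar) ∂μ
      = ∫ ω, ∑ j ∈ Finset.range N,
          (if j < T ω then ((α j / Q j - α j)^2) * (p j ⬝ᵥ A.mulVec (p j))
            else (α j)^2 * (p j ⬝ᵥ A.mulVec (p j))) ∂μ := by
        exact integral_congr_ae (Filter.Eventually.of_forall hpt)
    _ = ∑ j ∈ Finset.range N, ∫ ω,
          (if j < T ω then ((α j / Q j - α j)^2) * (p j ⬝ᵥ A.mulVec (p j))
            else (α j)^2 * (p j ⬝ᵥ A.mulVec (p j))) ∂μ := by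
        exact integral_finset_sum _ fun j _ => integrable_ite_mem μ _ (hSmeas j) _ _
    _ = ∑ j ∈ Finset.range N,
          ((1 - Q j) / Q j) * (α j) ^ 2 * (p j ⬝ᵥ A.mulVec (p j)) := by
        refine Finset.sum_congr rfl fun j hj => ?_
        rw [integral_ite_mem μ _ (hSmeas j), ← hQ j]
        have hq : Q j ≠ 0 := (hQpos j (Finset.mem_range.mp hj)).ne'
        field_simp
        ring
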